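/- (Explicit example where constant overwriting is suboptimal.) Let 𝒴 = {0,1}, 𝒳 = X̂ = {0,1,2}, P_X uniform, P_{Y|X}(0|0)=1, P_{Y|X}(1|1)=P_{Y|X}(1|2)=1, c(x,x̂)=1{x≠x̂}, and channel P_{X̂|X} with rows (1/3,1/3,1/3), (1/6,2/3,1/6), (1/2,0,1/2). Then: (i) Y and X̂ are independent; (ii) E[c(X,X̂)] = 1/2; (iii) Γ_min := min_{x̂} E[c(X,x̂)] = 2/3; hence the minimum over X̂ with Y−X−X̂ and I(Y;X̂)=0 of E[c(X,X̂)] is at most 1/2 < Γ_min. -/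

import Mathlib

open scoped BigOperators

noncomputable def MI {α β : Type*} [Fintype α] [Fintype β] (p : α → β → ℝ) : ℝ :=
  ∑ a, ∑ b, p a b * Real.log (p a b / ((∑ b', p a b') * (∑ a', p a' b)))

def IsChannel {α β : Type*} [Fintype β] (K : α → β → ℝ) : Prop :=
  (∀ a b, 0 ≤ K a b) ∧ ∀ a, ∑ b, K a b = 1

/-- The uniform source on `{0,1,2}`. -/
noncomputable def pXe : Fin 3 → ℝ := fun _ => 1 / 3

/-- The channel `P_{Y|X}` of the example. -/
noncomputable def chanE : Fin 3 → Fin 2 → ℝ := ![![1, 0], ![0, 1], ![0, 1]]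

/-- The channel `P_{X̂|X}` of the example. -/
noncomputable def K10 : Fin 3 → Fin 3 → ℝ :=
  ![![1/3, 1/3, 1/3], ![1/6, 2/3, 1/6], ![1/2, 0, 1/2]]

/-- Hamming cost. -/
noncomputable def cE : Fin 3 → Fin 3 → ℝ := fun x z => if x = z then 0 else 1

lemma K10_channel : IsChannel K10 := by
  constructor
  · intro a b
    fin_cases a <;> fin_cases b <;> norm_num [K10]
  · intro a
    fin_cases a <;> simp [K10, Fin.sum_univ_three] <;> norm_num

lemma MI_K10 : MI (fun y z => ∑ x, pXe x * chanE x y * K10 x z) = 0 := by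
  simp only [MI, Fin.sum_univ_three, Fin.sum_univ_two, pXe, chanE, K10,
    Matrix.cons_val_zero, Matrix.cons_val_one, Matrix.head_cons, Matrix.cons_val_two,
    Matrix.tail_cons, Matrix.head_fin_const, Matrix.vecHead, Matrix.vecTail]
  simp
  norm_num [Real.log_one]

lemma cost_K10 : (∑ x, ∑ z, pXe x * K10 x z * cE x z) = 1 / 2 := by
  simp [Fin.sum_univ_three, pXe, K10, cE]
  norm_num

/-- Explicit example where constant overwriting is suboptimal:
`Y ⟂ X̂`, `E[c(X,X̂)] = 1/2`, `Γ_min = 2/3`, hence the minimum over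
`X̂` with `Y − X − X̂` and `I(Y;X̂) = 0` is at most `1/2 < Γ_min`. -/
theorem stmt10 :
    (∀ y z, (∑ x, pXe x * chanE x y * K10 x z)
        = (∑ x, pXe x * chanE x y) * (∑ x, pXe x * K10 x z)) ∧
    (∑ x, ∑ z, pXe x * K10 x z * cE x z) = 1 / 2 ∧
    (⨅ z : Fin 3, ∑ x, pXe x * cE x z) = 2 / 3 ∧
    sInf {v | ∃ K : Fin 3 → Fin 3 → ℝ, IsChannel K ∧
        MI (fun y z => ∑ x, pXe x * chanE x y * K x z) = 0 ∧
        v = ∑ x, ∑ z, pXe x * K x z * cE x z} ≤ 1 / 2 ∧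
    (1 / 2 : ℝ) < 2 / 3 := by
  refine ⟨?_, cost_K10, ?_, ?_, by norm_num⟩
  · intro y z
    fin_cases y <;> fin_cases z <;>
      norm_num [Fin.sum_univ_three, pXe, chanE, K10, Matrix.cons_val_zero, Matrix.cons_val_one,
        Matrix.head_cons, Matrix.cons_val_two, Matrix.tail_cons, Matrix.vecHead, Matrix.vecTail]
  · have h : (fun z : Fin 3 => ∑ x, pXe x * cE x z) = fun _ => 2 / 3 := by
      funext z
      fin_cases z <;> simp [Fin.sum_univ_three, pXe, cE] <;> norm_num
    rw [h, ciInf_const]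
  · apply csInf_le
    · refine ⟨0, ?_⟩
      rintro v ⟨K, ⟨hK0, -⟩, -, rfl⟩
      apply Finset.sum_nonneg; intro x _
      apply Finset.sum_nonneg; intro z _
      have h1 : (0:ℝ) ≤ cE x z := by unfold cE; positivity
      have h2 : (0:ℝ) ≤ pXe x := by unfold pXe; norm_num
      have h3 := hK0 x z
      positivity
    · exact ⟨K10, K10_channel, MI_K10, cost_K10.symm⟩
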